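/- Let A be a commutative ring, f ∈ A a non-zero-divisor, A_f the localization, Â = lim A/(f^n) the completion, and let M be an A-module that is f-regular (multiplication by f on M is injective). Then the natural commutative square of A-modules M → A_f ⊗_A M, M → Â ⊗_A M, with both composites to A_f ⊗_A Â ⊗_A M, is a pullback square: M is the fiber product of A_f ⊗_A M and Â ⊗_A M over A_f ⊗_A Â ⊗_A M. -/

import Mathlib

open TensorProduct

suppress_compilation

theorem AdicCompletion.transitionMap_mk {R M : Type*} [CommRing R] [AddCommGroup M] [Module R M]
    (I : Ideal R) {m n : ℕ} (hmn : m ≤ n) (x : M) :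
    AdicCompletion.transitionMap I M hmn (Submodule.Quotient.mk x) = Submodule.Quotient.mk x :=
  rfl

namespace BL16

variable {A : Type} [CommRing A]

local notation "Cpl" f => AdicCompletion (Ideal.span {f}) A
local notation "Loc" f => Localization (Submonoid.powers f)

lemma mem_smul_top_iff (f : A) (n : ℕ) (x : A) :
    x ∈ ((Ideal.span {f}) ^ n • ⊤ : Submodule A A) ↔ ∃ b, b * f ^ n = x := by
  rw [smul_eq_mul, Ideal.mul_top, Ideal.span_singleton_pow, Ideal.mem_span_singleton']

lemma cancel_pow {f : A} (hf : f ∈ nonZeroDivisors A) {n : ℕ} {a b : A}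
    (h : f ^ n * a = f ^ n * b) : a = b := by
  have := pow_mem hf n
  exact mul_cancel_left_mem_nonZeroDivisors this |>.mp h

end BL16

namespace BL16

variable {A : Type} [CommRing A]

/-- `f^n` is regular on the completion. -/
lemma pow_smul_cancel {f : A} (hf : f ∈ nonZeroDivisors A) (n : ℕ)
    (c : AdicCompletion (Ideal.span {f}) A) (h : f ^ n • c = 0) : c = 0 := by
  apply AdicCompletion.ext
  intro k
  obtain ⟨a, ha⟩ := Submodule.Quotient.mk_surjective _ (c.val (n + k))
  have h1 : (f ^ n • c).val (n + k) = 0 := by rw [h, AdicCompletion.val_zero_apply]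
  rw [AdicCompletion.val_smul_apply, ← ha, ← Submodule.Quotient.mk_smul,
    Submodule.Quotient.mk_eq_zero, mem_smul_top_iff] at h1
  rw [smul_eq_mul] at h1
  obtain ⟨b, hb⟩ := h1
  have hab : a = b * f ^ k := by
    apply cancel_pow hf (n := n)
    rw [← hb, pow_add]; ring
  have h2 : c.val k = 0 := by
    rw [← c.property (Nat.le_add_left k n), ← ha, AdicCompletion.transitionMap_mk,
      Submodule.Quotient.mk_eq_zero, mem_smul_top_iff]
    exact ⟨b, hab.symm⟩
  rw [h2, AdicCompletion.val_zero_apply]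

/-- Elements of the completion whose `n`-th component vanishes are divisible by `f^n`. -/
lemma exists_pow_smul_of_val_zero {f : A} (hf : f ∈ nonZeroDivisors A) (n : ℕ)
    (c : AdicCompletion (Ideal.span {f}) A) (h : c.val n = 0) :
    ∃ d, c = f ^ n • d := by
  have key : ∀ k : ℕ, ∃ b : A,
      (Submodule.Quotient.mk (f ^ n * b) : A ⧸ ((Ideal.span {f}) ^ (n + k) • ⊤ : Submodule A A))
        = c.val (n + k) := by
    intro k
    obtain ⟨a, ha⟩ := Submodule.Quotient.mk_surjective _ (c.val (n + k))
    have h0 : (Submodule.Quotient.mk a : A ⧸ ((Ideal.span {f}) ^ n • ⊤ : Submodule A A)) = 0 := by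
      rw [← h, ← c.property (Nat.le_add_right n k), ← ha, AdicCompletion.transitionMap_mk]
    rw [Submodule.Quotient.mk_eq_zero, mem_smul_top_iff] at h0
    obtain ⟨b, hb⟩ := h0
    exact ⟨b, by rw [mul_comm, hb, ha]⟩
  choose b hb using key
  have compat : ∀ {m k : ℕ} (hmk : m ≤ k),
      AdicCompletion.transitionMap (Ideal.span {f}) A hmk
        ((fun k => (Submodule.Quotient.mk (b k) :
          A ⧸ ((Ideal.span {f}) ^ k • ⊤ : Submodule A A))) k)
        = (fun k => (Submodule.Quotient.mk (b k) :
          A ⧸ ((Ideal.span {f}) ^ k • ⊤ : Submodule A A))) m := by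
    intro m k hmk
    simp only [AdicCompletion.transitionMap_mk]
    rw [Submodule.Quotient.eq, mem_smul_top_iff]
    -- b k - b m ∈ (f^m)
    have e1 : (Submodule.Quotient.mk (f ^ n * b k) :
        A ⧸ ((Ideal.span {f}) ^ (n + m) • ⊤ : Submodule A A)) = c.val (n + m) := by
      rw [← c.property (by omega : n + m ≤ n + k), ← hb k, AdicCompletion.transitionMap_mk]
    rw [← hb m, Submodule.Quotient.eq, mem_smul_top_iff] at e1
    obtain ⟨t, ht⟩ := e1
    refine ⟨t, ?_⟩
    apply cancel_pow hf (n := n)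
    rw [mul_sub]
    rw [show f ^ n * (t * f ^ m) = t * f ^ (n + m) by rw [pow_add]; ring]
    exact ht
  refine ⟨⟨fun k => Submodule.Quotient.mk (b k), compat⟩, ?_⟩
  apply AdicCompletion.ext
  intro k
  have : c.val k = AdicCompletion.transitionMap (Ideal.span {f}) A (Nat.le_add_left k n)
      (c.val (n + k)) := (c.property _).symm
  rw [this, ← hb k, AdicCompletion.transitionMap_mk]
  exact (Submodule.Quotient.mk_smul _ (f ^ n) (b k)).symm

end BL16

namespace BL16

variable {A : Type} [CommRing A]

lemma of_one (f : A) : AdicCompletion.of (Ideal.span {f}) A 1 = 1 := by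
  apply AdicCompletion.ext
  intro n
  rw [AdicCompletion.of_apply, AdicCompletion.val_one]
  rfl

lemma of_eq_smul_one (f : A) (a : A) :
    AdicCompletion.of (Ideal.span {f}) A a = a • 1 := by
  rw [← of_one f, ← map_smul, smul_eq_mul, mul_one]

/-- Decomposition: any element of the completion is an element of `A` plus `f^n` times
something. -/
lemma exists_decomp {f : A} (hf : f ∈ nonZeroDivisors A) (n : ℕ)
    (c : AdicCompletion (Ideal.span {f}) A) :
    ∃ (a : A) (d : AdicCompletion (Ideal.span {f}) A),
      c = AdicCompletion.of (Ideal.span {f}) A a + f ^ n • d := by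
  obtain ⟨a, ha⟩ := Submodule.Quotient.mk_surjective _ (c.val n)
  have h0 : (c - AdicCompletion.of (Ideal.span {f}) A a).val n = 0 := by
    rw [AdicCompletion.val_sub_apply, AdicCompletion.of_apply, Submodule.mkQ_apply, ha, sub_self]
  obtain ⟨d, hd⟩ := exists_pow_smul_of_val_zero hf n _ h0
  exact ⟨a, d, by rw [← hd]; ring⟩

variable (f : A)

/-- `L → L ⊗ C`, `l ↦ l ⊗ 1`. -/
def j1 : (Localization (Submonoid.powers f)) →ₗ[A]
    (Localization (Submonoid.powers f)) ⊗[A] (AdicCompletion (Ideal.span {f}) A) :=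
  (TensorProduct.mk A (Localization (Submonoid.powers f))
    (AdicCompletion (Ideal.span {f}) A)).flip 1

/-- `C → L ⊗ C`, `c ↦ 1 ⊗ c`. -/
def j2 : (AdicCompletion (Ideal.span {f}) A) →ₗ[A]
    (Localization (Submonoid.powers f)) ⊗[A] (AdicCompletion (Ideal.span {f}) A) :=
  TensorProduct.mk A (Localization (Submonoid.powers f))
    (AdicCompletion (Ideal.span {f}) A) 1

/-- The diagonal `A → L × C`. -/
def δ : A →ₗ[A] (Localization (Submonoid.powers f)) × (AdicCompletion (Ideal.span {f}) A) :=
  (Algebra.linearMap A (Localization (Submonoid.powers f))).prod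
    (AdicCompletion.of (Ideal.span {f}) A)

/-- The difference map `L × C → L ⊗ C`. -/
def π : ((Localization (Submonoid.powers f)) × (AdicCompletion (Ideal.span {f}) A)) →ₗ[A]
    (Localization (Submonoid.powers f)) ⊗[A] (AdicCompletion (Ideal.span {f}) A) :=
  j1 f ∘ₗ LinearMap.fst A _ _ - j2 f ∘ₗ LinearMap.snd A _ _

lemma π_apply (l : Localization (Submonoid.powers f)) (c : AdicCompletion (Ideal.span {f}) A) :
    π f (l, c) = l ⊗ₜ[A] 1 - (1 : Localization (Submonoid.powers f)) ⊗ₜ[A] c := rfl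

lemma ilm (N : Type) [AddCommGroup N] [Module A N] :
    IsLocalizedModule (Submonoid.powers f)
      (TensorProduct.mk A (Localization (Submonoid.powers f)) N 1) :=
  (isLocalizedModule_iff_isBaseChange (Submonoid.powers f)
    (Localization (Submonoid.powers f)) _).2
    (TensorProduct.isBaseChange A N (Localization (Submonoid.powers f)))

end BL16

namespace BL16

variable {A : Type} [CommRing A] {f : A}

lemma exact_δ_π (hf : f ∈ nonZeroDivisors A) : Function.Exact (δ f) (π f) := by
  rintro ⟨l, c⟩
  constructor
  · intro h0
    rw [π_apply, sub_eq_zero] at h0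
    obtain ⟨⟨a, s⟩, hs⟩ := IsLocalization.surj (Submonoid.powers f) l
    obtain ⟨n, hn⟩ := (Submonoid.mem_powers_iff (s : A) f).mp s.2
    have hfl : (f ^ n) • l = algebraMap A (Localization (Submonoid.powers f)) a := by
      rw [Algebra.smul_def, hn, mul_comm]
      exact hs
    have key : (1 : Localization (Submonoid.powers f)) ⊗ₜ[A]
          (AdicCompletion.of (Ideal.span {f}) A a)
        = (1 : Localization (Submonoid.powers f)) ⊗ₜ[A] (f ^ n • c) := by
      calc (1 : Localization (Submonoid.powers f)) ⊗ₜ[A]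
            (AdicCompletion.of (Ideal.span {f}) A a)
          = a • ((1 : Localization (Submonoid.powers f)) ⊗ₜ[A]
              (1 : AdicCompletion (Ideal.span {f}) A)) := by
            rw [of_eq_smul_one, tmul_smul]
        _ = (a • (1 : Localization (Submonoid.powers f))) ⊗ₜ[A]
              (1 : AdicCompletion (Ideal.span {f}) A) := by rw [smul_tmul']
        _ = (algebraMap A (Localization (Submonoid.powers f)) a) ⊗ₜ[A] 1 := by
            rw [Algebra.algebraMap_eq_smul_one]
        _ = ((f ^ n) • l) ⊗ₜ[A] 1 := by rw [hfl]
        _ = (f ^ n) • (l ⊗ₜ[A] (1 : AdicCompletion (Ideal.span {f}) A)) := by rw [smul_tmul']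
        _ = (f ^ n) • ((1 : Localization (Submonoid.powers f)) ⊗ₜ[A] c) := by rw [h0]
        _ = (1 : Localization (Submonoid.powers f)) ⊗ₜ[A] (f ^ n • c) := by rw [tmul_smul]
    haveI := ilm f (AdicCompletion (Ideal.span {f}) A)
    obtain ⟨s', hs'⟩ := (IsLocalizedModule.eq_iff_exists (Submonoid.powers f)
      (TensorProduct.mk A (Localization (Submonoid.powers f))
        (AdicCompletion (Ideal.span {f}) A) 1)).mp key
    obtain ⟨k, hk⟩ := (Submonoid.mem_powers_iff (s' : A) f).mp s'.2
    have hofa : AdicCompletion.of (Ideal.span {f}) A a = f ^ n • c := by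
      have h1 : f ^ k • (f ^ n • c - AdicCompletion.of (Ideal.span {f}) A a) = 0 := by
        rw [Submonoid.smul_def, Submonoid.smul_def, ← hk] at hs'
        rw [smul_sub, sub_eq_zero]
        exact hs'.symm
      have := pow_smul_cancel hf k _ h1
      rw [sub_eq_zero] at this
      exact this.symm
    obtain ⟨γ, hγ⟩ := Submodule.Quotient.mk_surjective _ (c.val (n + 1))
    have e : (Submodule.Quotient.mk a :
          A ⧸ ((Ideal.span {f}) ^ (n + 1) • ⊤ : Submodule A A))
        = Submodule.Quotient.mk (f ^ n * γ) := by
      have := congrArg (fun z : AdicCompletion (Ideal.span {f}) A => z.val (n + 1)) hofa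
      simp only [AdicCompletion.val_smul_apply] at this
      rw [AdicCompletion.of_apply, Submodule.mkQ_apply, ← hγ,
        ← Submodule.Quotient.mk_smul] at this
      exact this
    rw [Submodule.Quotient.eq, mem_smul_top_iff] at e
    obtain ⟨t, ht⟩ := e
    have hab : a = f ^ n * (γ + t * f) := by
      have : t * f ^ (n + 1) = a - f ^ n * γ := ht
      rw [mul_add]
      rw [show f ^ n * (t * f) = t * f ^ (n + 1) by rw [pow_succ]; ring, this]
      ring
    set b := γ + t * f with hb
    have hcb : c = AdicCompletion.of (Ideal.span {f}) A b := by
      have h2 : AdicCompletion.of (Ideal.span {f}) A a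
          = f ^ n • AdicCompletion.of (Ideal.span {f}) A b := by
        rw [hab, ← map_smul]
        norm_num
      have h3 : f ^ n • (c - AdicCompletion.of (Ideal.span {f}) A b) = 0 := by
        rw [smul_sub, ← hofa, h2, sub_self]
      have := pow_smul_cancel hf n _ h3
      rwa [sub_eq_zero] at this
    have hlb : l = algebraMap A (Localization (Submonoid.powers f)) b := by
      have h4 : algebraMap A (Localization (Submonoid.powers f)) (f ^ n) * l
          = algebraMap A (Localization (Submonoid.powers f)) (f ^ n)
            * algebraMap A (Localization (Submonoid.powers f)) b := by
        rw [← Algebra.smul_def, hfl, hab, map_mul]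
      exact (IsLocalization.map_units (Localization (Submonoid.powers f))
        (⟨f ^ n, ⟨n, rfl⟩⟩ : Submonoid.powers f)).mul_left_cancel h4
    exact ⟨b, by rw [δ]; exact Prod.ext (by simp [hlb]) (by simp [hcb])⟩
  · rintro ⟨a, ha⟩
    rw [← ha]
    show π f (algebraMap A (Localization (Submonoid.powers f)) a,
      AdicCompletion.of (Ideal.span {f}) A a) = 0
    rw [π_apply, of_eq_smul_one, tmul_smul, Algebra.algebraMap_eq_smul_one, smul_tmul',
      sub_self]

lemma π_surj (hf : f ∈ nonZeroDivisors A) : Function.Surjective (π f) := by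
  intro z
  induction z using TensorProduct.induction_on with
  | zero => exact ⟨0, map_zero _⟩
  | tmul l c =>
    obtain ⟨⟨a', s⟩, hs⟩ := IsLocalization.surj (Submonoid.powers f) l
    obtain ⟨n, hn⟩ := (Submonoid.mem_powers_iff (s : A) f).mp s.2
    have hfl : (f ^ n) • l = algebraMap A (Localization (Submonoid.powers f)) a' := by
      rw [Algebra.smul_def, hn, mul_comm]
      exact hs
    obtain ⟨a, d, hd⟩ := exists_decomp hf n c
    refine ⟨(a • l, -(a' • d)), ?_⟩
    have e1 : l ⊗ₜ[A] (AdicCompletion.of (Ideal.span {f}) A a)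
        = (a • l) ⊗ₜ[A] (1 : AdicCompletion (Ideal.span {f}) A) := by
      rw [of_eq_smul_one, tmul_smul, smul_tmul']
    have e2 : l ⊗ₜ[A] (f ^ n • d)
        = (1 : Localization (Submonoid.powers f)) ⊗ₜ[A] (a' • d) := by
      calc l ⊗ₜ[A] (f ^ n • d) = ((f ^ n) • l) ⊗ₜ[A] d := (smul_tmul _ _ _).symm
        _ = (algebraMap A (Localization (Submonoid.powers f)) a') ⊗ₜ[A] d := by rw [hfl]
        _ = (a' • (1 : Localization (Submonoid.powers f))) ⊗ₜ[A] d := by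
            rw [Algebra.algebraMap_eq_smul_one]
        _ = (1 : Localization (Submonoid.powers f)) ⊗ₜ[A] (a' • d) := smul_tmul _ _ _
    rw [π_apply, TensorProduct.tmul_neg, sub_neg_eq_add, hd, TensorProduct.tmul_add, e1, e2]
  | add u v hu hv =>
    obtain ⟨p, hp⟩ := hu
    obtain ⟨q, hq⟩ := hv
    exact ⟨p + q, by rw [map_add, hp, hq]⟩

end BL16

namespace BL16

variable {A : Type} [CommRing A] (f : A) (M : Type) [AddCommGroup M] [Module A M]

lemma bridge1 :
    (LinearMap.rTensor M (π f)) ∘ₗ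
      (LinearMap.rTensor M (LinearMap.inl A (Localization (Submonoid.powers f))
        (AdicCompletion (Ideal.span {f}) A)))
    = (TensorProduct.assoc A (Localization (Submonoid.powers f))
        (AdicCompletion (Ideal.span {f}) A) M).symm.toLinearMap
      ∘ₗ LinearMap.lTensor (Localization (Submonoid.powers f))
          (TensorProduct.mk A (AdicCompletion (Ideal.span {f}) A) M 1) := by
  apply TensorProduct.ext'
  intro l m
  simp only [LinearMap.comp_apply, LinearMap.rTensor_tmul, LinearMap.lTensor_tmul,
    LinearMap.coe_inl, LinearEquiv.coe_coe, TensorProduct.mk_apply,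
    TensorProduct.assoc_symm_tmul, π_apply]
  rw [TensorProduct.tmul_zero, sub_zero]

lemma bridge2 :
    (LinearMap.rTensor M (π f)) ∘ₗ
      (LinearMap.rTensor M (LinearMap.inr A (Localization (Submonoid.powers f))
        (AdicCompletion (Ideal.span {f}) A)))
    + ((TensorProduct.assoc A (Localization (Submonoid.powers f))
        (AdicCompletion (Ideal.span {f}) A) M).symm.toLinearMap
      ∘ₗ (TensorProduct.mk A (Localization (Submonoid.powers f))
          ((AdicCompletion (Ideal.span {f}) A) ⊗[A] M) 1)) = 0 := by
  apply TensorProduct.ext'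
  intro c m
  simp only [LinearMap.add_apply, LinearMap.comp_apply, LinearMap.rTensor_tmul,
    LinearMap.coe_inr, LinearEquiv.coe_coe, TensorProduct.mk_apply,
    TensorProduct.assoc_symm_tmul, LinearMap.zero_apply]
  rw [show (π f) ((0 : Localization (Submonoid.powers f)), c)
      = (0 : Localization (Submonoid.powers f)) ⊗ₜ[A] (1 : AdicCompletion (Ideal.span {f}) A)
        - (1 : Localization (Submonoid.powers f)) ⊗ₜ[A] c from π_apply f 0 c,
    TensorProduct.zero_tmul, zero_sub, TensorProduct.neg_tmul]
  exact neg_add_cancel ((1 ⊗ₜ[A] c :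
    (Localization (Submonoid.powers f)) ⊗[A] (AdicCompletion (Ideal.span {f}) A)) ⊗ₜ[A] m)

lemma pow_reg {f : A} (hreg : Function.Injective (fun m : M => f • m)) (k : ℕ) {a b : M} :
    f ^ k • a = f ^ k • b → a = b := by
  induction k generalizing a b with
  | zero => intro h; simpa using h
  | succ k ih =>
    intro h
    rw [pow_succ, mul_smul, mul_smul] at h
    exact hreg (ih h)

end BL16


set_option synthInstance.maxHeartbeats 1000000 in
set_option maxHeartbeats 1000000 in
open BL16 in
/-- Beauville–Laszlo glueing at the level of objects: for a non-zero-divisor `f ∈ A`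
and an `f`-regular module `M`, the square formed by `M → A_f ⊗ M`, `M → Â ⊗ M` and
the two maps to `A_f ⊗ Â ⊗ M` commutes and is a pullback square: every compatible
pair comes from a unique element of `M`. -/
theorem stmt_16 {A : Type} [CommRing A] (f : A) (hf : f ∈ nonZeroDivisors A)
    (M : Type) [AddCommGroup M] [Module A M]
    (hreg : Function.Injective (fun m : M => f • m)) :
    (∀ m : M,
      LinearMap.lTensor (Localization (Submonoid.powers f))
          (TensorProduct.mk A (AdicCompletion (Ideal.span {f}) A) M 1)
          (TensorProduct.mk A (Localization (Submonoid.powers f)) M 1 m)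
        = TensorProduct.mk A (Localization (Submonoid.powers f))
            ((AdicCompletion (Ideal.span {f}) A) ⊗[A] M) 1
            (TensorProduct.mk A (AdicCompletion (Ideal.span {f}) A) M 1 m)) ∧
    (∀ (x : (Localization (Submonoid.powers f)) ⊗[A] M)
        (y : (AdicCompletion (Ideal.span {f}) A) ⊗[A] M),
      LinearMap.lTensor (Localization (Submonoid.powers f))
          (TensorProduct.mk A (AdicCompletion (Ideal.span {f}) A) M 1) x
        = TensorProduct.mk A (Localization (Submonoid.powers f))
            ((AdicCompletion (Ideal.span {f}) A) ⊗[A] M) 1 y →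
      ∃! m : M,
        TensorProduct.mk A (Localization (Submonoid.powers f)) M 1 m = x ∧
        TensorProduct.mk A (AdicCompletion (Ideal.span {f}) A) M 1 m = y) := by
  constructor
  · intro m
    simp only [TensorProduct.mk_apply, LinearMap.lTensor_tmul]
  · intro x y H
    have hex : Function.Exact (LinearMap.rTensor M (δ f)) (LinearMap.rTensor M (π f)) :=
      rTensor_exact M (exact_δ_π hf) (π_surj hf)
    set u := LinearMap.rTensor M (LinearMap.inl A (Localization (Submonoid.powers f))
          (AdicCompletion (Ideal.span {f}) A)) x
        + LinearMap.rTensor M (LinearMap.inr A (Localization (Submonoid.powers f))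
          (AdicCompletion (Ideal.span {f}) A)) y with hu
    have hπu : LinearMap.rTensor M (π f) u = 0 := by
      have hb1 := LinearMap.congr_fun (bridge1 f M) x
      have hb2 := LinearMap.congr_fun (bridge2 f M) y
      simp only [LinearMap.comp_apply, LinearMap.add_apply, LinearMap.zero_apply,
        LinearEquiv.coe_coe] at hb1 hb2
      rw [hu, map_add, hb1, H, add_comm]
      exact hb2
    obtain ⟨t, ht⟩ := (hex u).mp hπu
    set m := TensorProduct.lid A M t with hm
    have htm : t = (1 : A) ⊗ₜ[A] m := by
      rw [hm, ← TensorProduct.lid_symm_apply]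
      exact ((TensorProduct.lid A M).symm_apply_apply t).symm
    have e1 : LinearMap.rTensor M (LinearMap.fst A (Localization (Submonoid.powers f))
        (AdicCompletion (Ideal.span {f}) A)) u = x := by
      rw [hu, map_add, ← LinearMap.rTensor_comp_apply, ← LinearMap.rTensor_comp_apply,
        LinearMap.fst_comp_inl, LinearMap.fst_comp_inr, LinearMap.rTensor_id_apply,
        LinearMap.rTensor_zero, LinearMap.zero_apply, add_zero]
    have e2 : LinearMap.rTensor M (LinearMap.snd A (Localization (Submonoid.powers f))
        (AdicCompletion (Ideal.span {f}) A)) u = y := by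
      rw [hu, map_add, ← LinearMap.rTensor_comp_apply, ← LinearMap.rTensor_comp_apply,
        LinearMap.snd_comp_inl, LinearMap.snd_comp_inr, LinearMap.rTensor_id_apply,
        LinearMap.rTensor_zero, LinearMap.zero_apply, zero_add]
    have hx : TensorProduct.mk A (Localization (Submonoid.powers f)) M 1 m = x := by
      rw [← e1, ← ht, ← LinearMap.rTensor_comp_apply, htm, LinearMap.rTensor_tmul]
      show (1 : Localization (Submonoid.powers f)) ⊗ₜ[A] m
        = (algebraMap A (Localization (Submonoid.powers f)) 1) ⊗ₜ[A] m
      rw [map_one]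
    have hy : TensorProduct.mk A (AdicCompletion (Ideal.span {f}) A) M 1 m = y := by
      rw [← e2, ← ht, ← LinearMap.rTensor_comp_apply, htm, LinearMap.rTensor_tmul]
      show (1 : AdicCompletion (Ideal.span {f}) A) ⊗ₜ[A] m
        = (AdicCompletion.of (Ideal.span {f}) A 1) ⊗ₜ[A] m
      rw [of_one]
    refine ⟨m, ⟨hx, hy⟩, ?_⟩
    intro m' hm'
    haveI := ilm f M
    have : TensorProduct.mk A (Localization (Submonoid.powers f)) M 1 m'
        = TensorProduct.mk A (Localization (Submonoid.powers f)) M 1 m := by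
      rw [hm'.1, hx]
    obtain ⟨s, hs⟩ := (IsLocalizedModule.eq_iff_exists (Submonoid.powers f)
      (TensorProduct.mk A (Localization (Submonoid.powers f)) M 1)).mp this
    obtain ⟨k, hk⟩ := (Submonoid.mem_powers_iff (s : A) f).mp s.2
    rw [Submonoid.smul_def, Submonoid.smul_def, ← hk] at hs
    exact pow_reg M hreg k hs
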